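/- Under Y ⟂ Z | A=1, the projection of the MIV efficient influence function onto Λ^⊥ vanishes: the associated function c*(Y,X) = −(pr(A=1|X)/pr(A=1))·(δ(X)/δ^A(X))·[pr(A=0|Z=0,X)/pr(Z=0|X) + pr(A=0|Z=1,X)/pr(Z=1|X)] does not depend on Y, hence c*(Y,X) − E[c*(Y,X)|A=1,X] = 0 and consequently the EIF under the nonparametric model remains the EIF under the submodel restricted by Y ⟂ Z | A=1, X. -/

import Mathlib

open MeasureTheory


lemma indep_integral_mul
    {Ω : Type*} [MeasurableSpace Ω] {μ : Measure Ω} [IsProbabilityMeasure μ]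
    {A Z Y : Ω → ℝ} (hAm : Measurable A) (hZm : Measurable Z) (hYm : Measurable Y)
    (hA : ∀ ω, A ω = 0 ∨ A ω = 1) (hZ : ∀ ω, Z ω = 0 ∨ Z ω = 1)
    (hindep : ∀ s t : Set ℝ, MeasurableSet s → MeasurableSet t →
      μ ({ω | Y ω ∈ s} ∩ {ω | Z ω ∈ t} ∩ {ω | A ω = 1}) * μ {ω | A ω = 1}
        = μ ({ω | Y ω ∈ s} ∩ {ω | A ω = 1}) * μ ({ω | Z ω ∈ t} ∩ {ω | A ω = 1}))
    (f : ℝ → ℝ) (hf : Measurable f) :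
    (∫ ω, A ω * Z ω * f (Y ω) ∂μ) * (∫ ω, A ω ∂μ)
      = (∫ ω, A ω * f (Y ω) ∂μ) * (∫ ω, A ω * Z ω ∂μ) := by
  classical
  set S : Set Ω := {ω | A ω = 1} with hSdef
  set T : Set Ω := {ω | Z ω = 1} ∩ S with hTdef
  have hS : MeasurableSet S := hAm (measurableSet_singleton 1)
  have hT : MeasurableSet T := (hZm (measurableSet_singleton 1)).inter hS
  -- indicator identities
  have hindA : ∀ ω, A ω = S.indicator (fun _ => (1:ℝ)) ω := by
    intro ω
    rcases hA ω with h | h <;>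
      simp [Set.indicator, hSdef, Set.mem_setOf_eq, h]
  have hindAZ : ∀ ω, A ω * Z ω = T.indicator (fun _ => (1:ℝ)) ω := by
    intro ω
    rcases hA ω with h | h <;> rcases hZ ω with h' | h' <;>
      simp [Set.indicator, hTdef, hSdef, Set.mem_setOf_eq, h, h']
  have hmuS : (∫ ω, A ω ∂μ) = (μ S).toReal := by
    rw [show (fun ω => A ω) = S.indicator (fun _ => (1:ℝ)) from funext hindA]
    simp [integral_indicator hS, measureReal_def]
  have hmuT : (∫ ω, A ω * Z ω ∂μ) = (μ T).toReal := by
    rw [show (fun ω => A ω * Z ω) = T.indicator (fun _ => (1:ℝ)) from funext hindAZ]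
    simp [integral_indicator hT, measureReal_def]
  -- integrals as restricted integrals
  have hiT : (∫ ω, A ω * Z ω * f (Y ω) ∂μ) = ∫ ω in T, f (Y ω) ∂μ := by
    rw [← integral_indicator hT]
    apply integral_congr_ae
    filter_upwards with ω
    rw [show A ω * Z ω * f (Y ω) = (A ω * Z ω) * f (Y ω) from rfl, hindAZ ω]
    by_cases h : ω ∈ T <;> simp [Set.indicator, h]
  have hiS : (∫ ω, A ω * f (Y ω) ∂μ) = ∫ ω in S, f (Y ω) ∂μ := by
    rw [← integral_indicator hS]
    apply integral_congr_ae
    filter_upwards with ω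
    rw [hindA ω]
    by_cases h : ω ∈ S <;> simp [Set.indicator, h]
  -- measure equality
  have hmeas : (μ S) • (μ.restrict T).map Y = (μ T) • (μ.restrict S).map Y := by
    ext s hs
    simp only [Measure.smul_apply, Measure.map_apply hYm hs,
      Measure.restrict_apply (hYm hs), smul_eq_mul]
    have key := hindep s {1} hs (measurableSet_singleton 1)
    have e1 : Y ⁻¹' s ∩ T = {ω | Y ω ∈ s} ∩ {ω | Z ω ∈ ({1} : Set ℝ)} ∩ {ω | A ω = 1} := by
      rw [hTdef, hSdef]; ext ω; simp [Set.mem_setOf_eq, and_assoc]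
    have e2 : Y ⁻¹' s ∩ S = {ω | Y ω ∈ s} ∩ {ω | A ω = 1} := rfl
    have e3 : T = {ω | Z ω ∈ ({1} : Set ℝ)} ∩ {ω | A ω = 1} := by
      rw [hTdef, hSdef]; ext ω; simp [Set.mem_setOf_eq]
    rw [mul_comm (μ S) _, mul_comm (μ T) _, e1, e2, e3, key, mul_comm]
  -- compare integrals
  have hint1 : ∫ ω in T, f (Y ω) ∂μ = ∫ y, f y ∂((μ.restrict T).map Y) :=
    (integral_map hYm.aemeasurable hf.aestronglyMeasurable).symm
  have hint2 : ∫ ω in S, f (Y ω) ∂μ = ∫ y, f y ∂((μ.restrict S).map Y) :=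
    (integral_map hYm.aemeasurable hf.aestronglyMeasurable).symm
  have hfin : (∫ y, f y ∂((μ S) • (μ.restrict T).map Y))
      = ∫ y, f y ∂((μ T) • (μ.restrict S).map Y) := by rw [hmeas]
  rw [integral_smul_measure, integral_smul_measure] at hfin
  rw [hiT, hiS, hmuS, hmuT, hint1, hint2]
  simpa [smul_eq_mul, mul_comm] using hfin

lemma integrable_of_bdd' {Ω : Type*} [MeasurableSpace Ω] {μ : Measure Ω}
    [IsFiniteMeasure μ] {f : Ω → ℝ} (hm : Measurable f) (C : ℝ)
    (h : ∀ ω, |f ω| ≤ C) : Integrable f μ := by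
  have : MemLp f ⊤ μ := memLp_top_of_bound hm.aestronglyMeasurable C
    (Filter.Eventually.of_forall (by simpa [Real.norm_eq_abs] using h))
  exact this.integrable le_top



set_option maxHeartbeats 1000000 in
/-- Under `Y ⟂ Z | A=1` (working conditionally on the covariates `X`,
which are suppressed as in the paper's appendix), the projection of the MIV efficient
influence function
`EIF = (1/pr(A=1))[A{Y+δ−ψ} + ρ((2Z−1)/π_Z)Ω{Y(1−A)−e_Z−(A−p_Z)δ}]`
onto `Λ^⊥ = span{A(Z−E[Z|A=1])(d(Y)−E[d(Y)|A=1])}` vanishes: the associated function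
`c*` does not depend on `Y`, hence `c* − E[c*|A=1] = 0`, and consequently the EIF under
the nonparametric model remains the EIF under the submodel restricted by `Y ⟂ Z | A=1`.
This is expressed as: the EIF is orthogonal in `L²(P)` to every element
`A(Z−mZ)(d(Y)−md)` of `Λ^⊥`, so its orthogonal projection onto `Λ^⊥` is `0`. -/
theorem eif_projection_vanishes
    (Ω : Type*) [MeasurableSpace Ω] (μ : Measure Ω) [IsProbabilityMeasure μ]
    (A Z Y : Ω → ℝ) (hAm : Measurable A) (hZm : Measurable Z) (hYm : Measurable Y)
    (hA : ∀ ω, A ω = 0 ∨ A ω = 1) (hZ : ∀ ω, Z ω = 0 ∨ Z ω = 1)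
    (hPA : 0 < ∫ ω, A ω ∂μ) (hY2 : MemLp Y 2 μ)
    -- conditional independence Y ⟂ Z | A = 1
    (hindep : ∀ s t : Set ℝ, MeasurableSet s → MeasurableSet t →
      μ ({ω | Y ω ∈ s} ∩ {ω | Z ω ∈ t} ∩ {ω | A ω = 1}) * μ {ω | A ω = 1}
        = μ ({ω | Y ω ∈ s} ∩ {ω | A ω = 1}) * μ ({ω | Z ω ∈ t} ∩ {ω | A ω = 1}))
    -- nuisance quantities (conditionally on X, hence constants)
    (p0 p1 π0 π1 e0 e1 δc ψc : ℝ)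
    (hπ1pos : π1 ∈ Set.Ioo (0:ℝ) 1) (hπ01 : π0 = 1 - π1) (hgap : p1 ≠ p0)
    (hδ : δc = (e1 - e0) / (p1 - p0))
    (mZ : ℝ) (hmZ : mZ = (∫ ω, A ω * Z ω ∂μ) / (∫ ω, A ω ∂μ))
    (EIF : Ω → ℝ)
    (hEIF : ∀ ω, EIF ω = (1 / ∫ ω', A ω' ∂μ) *
      (A ω * (Y ω + δc - ψc)
        + (p1 * π1 + p0 * π0) * ((2 * Z ω - 1) / (Z ω * π1 + (1 - Z ω) * π0))
            * (1 / (p1 - p0))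
            * (Y ω * (1 - A ω) - (Z ω * e1 + (1 - Z ω) * e0)
                - (A ω - (Z ω * p1 + (1 - Z ω) * p0)) * δc))) :
    ∀ d : ℝ → ℝ, Measurable d → (∃ Cd : ℝ, ∀ y, |d y| ≤ Cd) →
      ∫ ω, EIF ω * (A ω * (Z ω - mZ)
          * (d (Y ω) - (∫ ω', A ω' * d (Y ω') ∂μ) / (∫ ω', A ω' ∂μ))) ∂μ = 0 := by
  rintro d hdm ⟨Cd, hCd⟩
  set P : ℝ := ∫ ω, A ω ∂μ with hPdef
  have hPne : P ≠ 0 := ne_of_gt hPA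
  have hπ1ne : π1 ≠ 0 := ne_of_gt hπ1pos.1
  have hπ0ne : π0 ≠ 0 := by rw [hπ01]; have := hπ1pos.2; intro h; linarith
  have hgne : p1 - p0 ≠ 0 := sub_ne_zero.mpr hgap
  set md : ℝ := (∫ ω', A ω' * d (Y ω') ∂μ) / P with hmddef
  set K : ℝ := δc - ψc + (p1 * π1 + p0 * π0) * (-1/π0) * (1/(p1-p0)) * (-e0 - (1 - p0)*δc)
    with hKdef
  set b : ℝ := (p1 * π1 + p0 * π0) * (1/π1) * (1/(p1-p0)) * (-e1 - (1-p1)*δc)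
    - (p1 * π1 + p0 * π0) * (-1/π0) * (1/(p1-p0)) * (-e0 - (1 - p0)*δc) with hbdef
  -- pointwise rewriting of the integrand
  have hpt : ∀ ω, EIF ω * (A ω * (Z ω - mZ) * (d (Y ω) - md))
      = (1/P) * (A ω * Y ω * Z ω * d (Y ω)
          - mZ * (A ω * Y ω * d (Y ω))
          - md * (A ω * Y ω * Z ω)
          + (mZ * md) * (A ω * Y ω)
          + (K + b * (1 - mZ)) * (A ω * Z ω * d (Y ω))
          - (K * mZ) * (A ω * d (Y ω))
          - ((K + b * (1 - mZ)) * md) * (A ω * Z ω)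
          + (K * mZ * md) * A ω) := by
    intro ω
    have step1 : EIF ω * (A ω * (Z ω - mZ) * (d (Y ω) - md))
        = (1/P) * (A ω * ((Y ω + K) + b * Z ω) * (Z ω - mZ) * (d (Y ω) - md)) := by
      rw [hEIF ω, hKdef, hbdef]
      rcases hA ω with ha | ha <;> rcases hZ ω with hz | hz <;> rw [ha, hz] <;>
        simp only [zero_mul, one_mul, mul_zero, mul_one, sub_zero, zero_add, add_zero, sub_self] <;> field_simp <;> ring
    rw [step1]
    rcases hZ ω with hz | hz <;> rw [hz] <;> ring
  rw [show (fun ω => EIF ω * (A ω * (Z ω - mZ) * (d (Y ω) - md))) = fun ω =>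
      (1/P) * (A ω * Y ω * Z ω * d (Y ω)
          - mZ * (A ω * Y ω * d (Y ω))
          - md * (A ω * Y ω * Z ω)
          + (mZ * md) * (A ω * Y ω)
          + (K + b * (1 - mZ)) * (A ω * Z ω * d (Y ω))
          - (K * mZ) * (A ω * d (Y ω))
          - ((K + b * (1 - mZ)) * md) * (A ω * Z ω)
          + (K * mZ * md) * A ω) from funext hpt]
  -- integrability facts
  have hCd0 : 0 ≤ Cd := le_trans (abs_nonneg _) (hCd 0)
  have hAb : ∀ ω, |A ω| ≤ 1 := by intro ω; rcases hA ω with h | h <;> simp [h]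
  have hZb : ∀ ω, |Z ω| ≤ 1 := by intro ω; rcases hZ ω with h | h <;> simp [h]
  have hYi : Integrable Y μ := hY2.integrable one_le_two
  have hi8 : Integrable A μ := integrable_of_bdd' hAm 1 hAb
  have hi7 : Integrable (fun ω => A ω * Z ω) μ := by
    refine integrable_of_bdd' (hAm.mul hZm) 1 (fun ω => ?_)
    rw [abs_mul]
    calc |A ω| * |Z ω| ≤ 1 * 1 := by
          exact mul_le_mul (hAb ω) (hZb ω) (abs_nonneg _) zero_le_one
      _ = 1 := by ring
  have hi6 : Integrable (fun ω => A ω * d (Y ω)) μ := by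
    refine integrable_of_bdd' (hAm.mul (hdm.comp hYm)) Cd (fun ω => ?_)
    rw [abs_mul]
    calc |A ω| * |d (Y ω)| ≤ 1 * Cd :=
          mul_le_mul (hAb ω) (hCd _) (abs_nonneg _) zero_le_one
      _ = Cd := by ring
  have hi5 : Integrable (fun ω => A ω * Z ω * d (Y ω)) μ := by
    refine integrable_of_bdd' ((hAm.mul hZm).mul (hdm.comp hYm)) Cd (fun ω => ?_)
    rw [abs_mul, abs_mul]
    calc |A ω| * |Z ω| * |d (Y ω)| ≤ 1 * 1 * Cd := by
          refine mul_le_mul (mul_le_mul (hAb ω) (hZb ω) (abs_nonneg _) zero_le_one)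
            (hCd _) (abs_nonneg _) (by norm_num)
      _ = Cd := by ring
  have hi4 : Integrable (fun ω => A ω * Y ω) μ :=
    hYi.bdd_mul (c := 1) hAm.aestronglyMeasurable (Filter.Eventually.of_forall fun ω => by simpa [Real.norm_eq_abs] using hAb ω)
  have hi3 : Integrable (fun ω => A ω * Y ω * Z ω) μ := by
    have h := hYi.bdd_mul (c := 1) (hAm.mul hZm).aestronglyMeasurable
      (Filter.Eventually.of_forall fun ω => by
        simp only [Real.norm_eq_abs, Pi.mul_apply, Function.comp_apply, abs_mul]
        exact mul_le_mul (hAb ω) (hZb ω) (abs_nonneg _) zero_le_one |>.trans (by norm_num))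
    exact h.congr (Filter.Eventually.of_forall fun ω => by simp only [Function.comp_apply, Pi.mul_apply]; ring)
  have hi2 : Integrable (fun ω => A ω * Y ω * d (Y ω)) μ := by
    have h := hYi.bdd_mul (c := Cd) (hAm.mul (hdm.comp hYm)).aestronglyMeasurable
      (Filter.Eventually.of_forall fun ω => by
        simp only [Real.norm_eq_abs, Pi.mul_apply, Function.comp_apply, abs_mul]
        calc |A ω| * |d (Y ω)| ≤ 1 * Cd :=
              mul_le_mul (hAb ω) (hCd _) (abs_nonneg _) zero_le_one
          _ = Cd := by ring)
    exact h.congr (Filter.Eventually.of_forall fun ω => by simp only [Function.comp_apply, Pi.mul_apply]; ring)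
  have hi1 : Integrable (fun ω => A ω * Y ω * Z ω * d (Y ω)) μ := by
    have h := hYi.bdd_mul (c := Cd) ((hAm.mul hZm).mul (hdm.comp hYm)).aestronglyMeasurable
      (Filter.Eventually.of_forall fun ω => by
        simp only [Real.norm_eq_abs, Pi.mul_apply, Function.comp_apply, abs_mul]
        calc |A ω| * |Z ω| * |d (Y ω)| ≤ 1 * 1 * Cd := by
              refine mul_le_mul (mul_le_mul (hAb ω) (hZb ω) (abs_nonneg _) zero_le_one)
                (hCd _) (abs_nonneg _) (by norm_num)
          _ = Cd := by ring)
    exact h.congr (Filter.Eventually.of_forall fun ω => by simp only [Function.comp_apply, Pi.mul_apply]; ring)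
  have it2 := hi2.const_mul mZ
  have it3 := hi3.const_mul md
  have it4 := hi4.const_mul (mZ * md)
  have it5 := hi5.const_mul (K + b * (1 - mZ))
  have it6 := hi6.const_mul (K * mZ)
  have it7 := hi7.const_mul ((K + b * (1 - mZ)) * md)
  have it8 := hi8.const_mul (K * mZ * md)
  have j2 : Integrable (fun ω => A ω * Y ω * Z ω * d (Y ω) - mZ * (A ω * Y ω * d (Y ω))) μ := (hi1.sub it2)
  have j3 : Integrable (fun ω => A ω * Y ω * Z ω * d (Y ω) - mZ * (A ω * Y ω * d (Y ω)) - md * (A ω * Y ω * Z ω)) μ := ((hi1.sub it2).sub it3)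
  have j4 : Integrable (fun ω => A ω * Y ω * Z ω * d (Y ω) - mZ * (A ω * Y ω * d (Y ω)) - md * (A ω * Y ω * Z ω) + mZ * md * (A ω * Y ω)) μ := (((hi1.sub it2).sub it3).add it4)
  have j5 : Integrable (fun ω => A ω * Y ω * Z ω * d (Y ω) - mZ * (A ω * Y ω * d (Y ω)) - md * (A ω * Y ω * Z ω) + mZ * md * (A ω * Y ω) + (K + b * (1 - mZ)) * (A ω * Z ω * d (Y ω))) μ := ((((hi1.sub it2).sub it3).add it4).add it5)
  have j6 : Integrable (fun ω => A ω * Y ω * Z ω * d (Y ω) - mZ * (A ω * Y ω * d (Y ω)) - md * (A ω * Y ω * Z ω) + mZ * md * (A ω * Y ω) + (K + b * (1 - mZ)) * (A ω * Z ω * d (Y ω)) - K * mZ * (A ω * d (Y ω))) μ := (((((hi1.sub it2).sub it3).add it4).add it5).sub it6)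
  have j7 : Integrable (fun ω => A ω * Y ω * Z ω * d (Y ω) - mZ * (A ω * Y ω * d (Y ω)) - md * (A ω * Y ω * Z ω) + mZ * md * (A ω * Y ω) + (K + b * (1 - mZ)) * (A ω * Z ω * d (Y ω)) - K * mZ * (A ω * d (Y ω)) - (K + b * (1 - mZ)) * md * (A ω * Z ω)) μ := ((((((hi1.sub it2).sub it3).add it4).add it5).sub it6).sub it7)
  rw [integral_const_mul,
    integral_add j7 it8,
    integral_sub j6 it7,
    integral_sub j5 it6,
    integral_add j4 it5,
    integral_add j3 it4,
    integral_sub j2 it3,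
    integral_sub hi1 it2,
    integral_const_mul, integral_const_mul, integral_const_mul, integral_const_mul,
    integral_const_mul, integral_const_mul, integral_const_mul]
  -- independence consequences
  have key1 := indep_integral_mul hAm hZm hYm hA hZ hindep (fun y => y * d y)
    (measurable_id.mul hdm)
  have key2 := indep_integral_mul hAm hZm hYm hA hZ hindep d hdm
  have key3 := indep_integral_mul hAm hZm hYm hA hZ hindep (fun y => y) measurable_id
  rw [show (fun ω => A ω * Z ω * (Y ω * d (Y ω))) = fun ω => A ω * Y ω * Z ω * d (Y ω)
      from funext fun ω => by ring,
    show (fun ω => A ω * (Y ω * d (Y ω))) = fun ω => A ω * Y ω * d (Y ω)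
      from funext fun ω => by ring] at key1
  rw [show (fun ω => A ω * Z ω * Y ω) = fun ω => A ω * Y ω * Z ω
      from funext fun ω => by ring,
    show (fun ω => A ω * Y ω) = fun ω => A ω * Y ω from rfl] at key3
  rw [← hPdef] at key1 key2 key3
  have h1 : (∫ ω, A ω * Y ω * Z ω * d (Y ω) ∂μ)
      = (∫ ω, A ω * Y ω * d (Y ω) ∂μ) * (∫ ω, A ω * Z ω ∂μ) / P :=
    (eq_div_iff hPne).mpr key1
  have h5 : (∫ ω, A ω * Z ω * d (Y ω) ∂μ)
      = (∫ ω, A ω * d (Y ω) ∂μ) * (∫ ω, A ω * Z ω ∂μ) / P :=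
    (eq_div_iff hPne).mpr key2
  have h3 : (∫ ω, A ω * Y ω * Z ω ∂μ)
      = (∫ ω, A ω * Y ω ∂μ) * (∫ ω, A ω * Z ω ∂μ) / P :=
    (eq_div_iff hPne).mpr key3
  rw [h1, h5, h3, hmZ, ← hPdef, hmddef]
  have hmd6 : (∫ ω', A ω' * d (Y ω') ∂μ) = ∫ ω, A ω * d (Y ω) ∂μ := rfl
  rw [hmd6]
  field_simp
  ring
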